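/- With the sequences α_k, β_k, A_k, c_k, q_k of the Kogan iteration (α₁=1, β₁=1/2, c₁=1+h, A₁=1, α_k = c_{k-1}β_{k-1}, β_k = A_{k-1}²β_{k-1} + α_k²/2, A_k = A_{k-1}² + α_k c_{k-1}, c_k = c_{k-1}(1 + q_k), q_k = A_k h^{2^{k-1}}), one has for k ≥ 3: q_k = q_{k-1}² + (1/2)(1+q_{k-1})²(q_{k-1}² - q_{k-2}⁴). -/
import Mathlib


theorem q_recursion_two_back (h : ℝ) (hh : 0 ≤ h)
    (α β A c q : ℕ → ℝ)
    (hα1 : α 1 = 1) (hβ1 : β 1 = 1 / 2) (hc1 : c 1 = 1 + h) (hA1 : A 1 = 1)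
    (hα : ∀ k, 2 ≤ k → α k = c (k - 1) * β (k - 1))
    (hβ : ∀ k, 2 ≤ k → β k = A (k - 1) ^ 2 * β (k - 1) + α k ^ 2 / 2)
    (hA : ∀ k, 2 ≤ k → A k = A (k - 1) ^ 2 + α k * c (k - 1))
    (hc : ∀ k, 2 ≤ k → c k = c (k - 1) * (1 + q k))
    (hq : ∀ k, q k = A k * h ^ 2 ^ (k - 1)) :
    ∀ k, 3 ≤ k →
      q k = q (k - 1) ^ 2 +
        1 / 2 * (1 + q (k - 1)) ^ 2 * (q (k - 1) ^ 2 - q (k - 2) ^ 4) := by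
  intro k hk
  obtain ⟨n, rfl⟩ : ∃ n, k = n + 3 := ⟨k - 3, by omega⟩
  have i1 : n + 3 - 1 = n + 2 := by omega
  have i2 : n + 3 - 2 = n + 1 := by omega
  have i3 : n + 2 - 1 = n + 1 := by omega
  have i4 : n + 1 - 1 = n := by omega
  have eα3 := hα (n+3) (by omega)
  have eα2 := hα (n+2) (by omega)
  have eβ2 := hβ (n+2) (by omega)
  have eA3 := hA (n+3) (by omega)
  have eA2 := hA (n+2) (by omega)
  have ec2 := hc (n+2) (by omega)
  rw [i1] at eα3 eA3
  rw [i3] at eα2 eβ2 eA2 ec2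
  have hq3 := hq (n+3)
  have hq2 := hq (n+2)
  have hq1 := hq (n+1)
  rw [i1] at hq3
  rw [i3] at hq2
  rw [i4] at hq1
  have hx2 : h ^ 2 ^ (n+1) = (h ^ 2 ^ n) ^ 2 := by
    rw [← pow_mul, pow_succ]
  have hx4 : h ^ 2 ^ (n+2) = (h ^ 2 ^ n) ^ 4 := by
    rw [← pow_mul]
    congr 1
    rw [pow_add]; norm_num
  rw [i1, i2]
  simp only [hq3, hq2, hq1, eA3, eα3, ec2, eβ2, eα2, eA2, hx2, hx4]
  ring
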